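/- For every 1-free star expression e, e ≡ Σ_{e ⇒ a} a + Σ_{e →a f} a·f, where the sums range over the outputs and outgoing transitions of e in the operational semantics (these sets are finite), and the empty sum is 0. -/

import Mathlib

/-- 1-free star expressions over alphabet `A`. -/
inductive SExp (A : Type) : Type
  | act : A → SExp A
  | zero : SExp A
  | add : SExp A → SExp A → SExp A
  | seq : SExp A → SExp A → SExp A
  | star : SExp A → SExp A → SExp A

/-- The output relation `e ⇒ a` of the operational semantics. -/
inductive SOut {A : Type} : SExp A → A → Prop
  | act (a : A) : SOut (.act a) a
  | addL {e₁ e₂ : SExp A} {a : A} : SOut e₁ a → SOut (.add e₁ e₂) a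
  | addR {e₁ e₂ : SExp A} {a : A} : SOut e₂ a → SOut (.add e₁ e₂) a
  | star {e₁ e₂ : SExp A} {a : A} : SOut e₂ a → SOut (.star e₁ e₂) a

/-- The transition relation `e →a f` of the operational semantics. -/
inductive STr {A : Type} : SExp A → A → SExp A → Prop
  | addL {e₁ e₂ f : SExp A} {a : A} : STr e₁ a f → STr (.add e₁ e₂) a f
  | addR {e₁ e₂ f : SExp A} {a : A} : STr e₂ a f → STr (.add e₁ e₂) a f
  | seqO {e₁ e₂ : SExp A} {a : A} : SOut e₁ a → STr (.seq e₁ e₂) a e₂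
  | seqT {e₁ e₂ f : SExp A} {a : A} : STr e₁ a f → STr (.seq e₁ e₂) a (.seq f e₂)
  | starR {e₁ e₂ f : SExp A} {a : A} : STr e₂ a f → STr (.star e₁ e₂) a f
  | starL {e₁ e₂ f : SExp A} {a : A} : STr e₁ a f → STr (.star e₁ e₂) a (.seq f (.star e₁ e₂))
  | starO {e₁ e₂ : SExp A} {a : A} : SOut e₁ a → STr (.star e₁ e₂) a (.star e₁ e₂)

/-- Provable equivalence: the smallest congruence containing Milner's 1-free
axioms (B1)-(B7), (BKS1), (BKS2) and closed under the rule (RSP). -/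
inductive Eqv {A : Type} : SExp A → SExp A → Prop
  | refl (e : SExp A) : Eqv e e
  | symm {e f : SExp A} : Eqv e f → Eqv f e
  | trans {e f g : SExp A} : Eqv e f → Eqv f g → Eqv e g
  | addCongr {e₁ f₁ e₂ f₂ : SExp A} : Eqv e₁ f₁ → Eqv e₂ f₂ → Eqv (.add e₁ e₂) (.add f₁ f₂)
  | seqCongr {e₁ f₁ e₂ f₂ : SExp A} : Eqv e₁ f₁ → Eqv e₂ f₂ → Eqv (.seq e₁ e₂) (.seq f₁ f₂)
  | starCongr {e₁ f₁ e₂ f₂ : SExp A} : Eqv e₁ f₁ → Eqv e₂ f₂ → Eqv (.star e₁ e₂) (.star f₁ f₂)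
  | B1 (e₁ e₂ : SExp A) : Eqv (.add e₁ e₂) (.add e₂ e₁)
  | B2 (e₁ e₂ e₃ : SExp A) : Eqv (.add e₁ (.add e₂ e₃)) (.add (.add e₁ e₂) e₃)
  | B3 (e₁ : SExp A) : Eqv (.add e₁ e₁) e₁
  | B4 (e₁ e₂ e₃ : SExp A) : Eqv (.seq (.add e₁ e₂) e₃) (.add (.seq e₁ e₃) (.seq e₂ e₃))
  | B5 (e₁ e₂ e₃ : SExp A) : Eqv (.seq e₁ (.seq e₂ e₃)) (.seq (.seq e₁ e₂) e₃)
  | B6 (e₁ : SExp A) : Eqv (.add e₁ .zero) e₁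
  | B7 (e₁ : SExp A) : Eqv (.seq .zero e₁) .zero
  | BKS1 (e₁ e₂ : SExp A) : Eqv (.star e₁ e₂) (.add (.seq e₁ (.star e₁ e₂)) e₂)
  | BKS2 (e₁ e₂ e₃ : SExp A) : Eqv (.seq (.star e₁ e₂) e₃) (.star e₁ (.seq e₂ e₃))
  | RSP {e₁ e₂ e₃ : SExp A} : Eqv e₃ (.add (.seq e₁ e₃) e₂) → Eqv e₃ (.star e₁ e₂)

/-- Generalized sum of a list of expressions (the empty sum is `0`). -/
def sumList {A : Type} (l : List (SExp A)) : SExp A := l.foldr SExp.add SExp.zero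

section Aux

variable {A : Type}

instance : Trans (@Eqv A) (@Eqv A) (@Eqv A) := ⟨Eqv.trans⟩

@[simp] lemma sumList_nil : sumList ([] : List (SExp A)) = SExp.zero := rfl
@[simp] lemma sumList_cons (x : SExp A) (l : List (SExp A)) :
    sumList (x :: l) = SExp.add x (sumList l) := rfl

lemma eqv_zero_add (e : SExp A) : Eqv (.add .zero e) e :=
  Eqv.trans (Eqv.B1 _ _) (Eqv.B6 _)

lemma sum_absorb {x y : SExp A} {l : List (SExp A)}
    (hy : y ∈ l) (hxy : Eqv x y) : Eqv (sumList l) (.add x (sumList l)) := by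
  induction l with
  | nil => cases hy
  | cons h t ih =>
    rcases List.mem_cons.1 hy with rfl | hy'
    · refine Eqv.symm ?_
      refine Eqv.trans (Eqv.B2 _ _ _) ?_
      exact Eqv.addCongr (Eqv.trans (Eqv.addCongr hxy (Eqv.refl _)) (Eqv.B3 _))
        (Eqv.refl _)
    · simp only [sumList_cons]
      refine Eqv.trans (Eqv.addCongr (Eqv.refl h) (ih hy')) ?_
      refine Eqv.trans (Eqv.B2 _ _ _) ?_
      refine Eqv.trans (Eqv.addCongr (Eqv.B1 _ _) (Eqv.refl _)) ?_
      exact Eqv.symm (Eqv.B2 _ _ _)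

lemma sum_subset {l' l : List (SExp A)}
    (h : ∀ x ∈ l', ∃ y ∈ l, Eqv x y) :
    Eqv (.add (sumList l') (sumList l)) (sumList l) := by
  induction l' with
  | nil => exact eqv_zero_add _
  | cons x t ih =>
    obtain ⟨y, hy, hxy⟩ := h x List.mem_cons_self
    have iht := ih (fun z hz => h z (List.mem_cons_of_mem _ hz))
    simp only [sumList_cons]
    refine Eqv.trans (Eqv.symm (Eqv.B2 _ _ _)) ?_
    refine Eqv.trans (Eqv.addCongr (Eqv.refl x) iht) ?_
    exact Eqv.symm (sum_absorb hy hxy)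

lemma sum_ext {l l' : List (SExp A)}
    (h1 : ∀ x ∈ l, ∃ y ∈ l', Eqv x y)
    (h2 : ∀ x ∈ l', ∃ y ∈ l, Eqv x y) :
    Eqv (sumList l) (sumList l') := by
  refine Eqv.trans (Eqv.symm (sum_subset h2)) ?_
  exact Eqv.trans (Eqv.B1 _ _) (sum_subset h1)

lemma sum_append (l1 l2 : List (SExp A)) :
    Eqv (sumList (l1 ++ l2)) (.add (sumList l1) (sumList l2)) := by
  induction l1 with
  | nil => exact Eqv.symm (eqv_zero_add _)
  | cons x t ih =>
    simp only [List.cons_append, sumList_cons]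
    exact Eqv.trans (Eqv.addCongr (Eqv.refl x) ih) (Eqv.B2 _ _ _)

lemma seq_sum (l : List (SExp A)) (c : SExp A) :
    Eqv (.seq (sumList l) c) (sumList (l.map (fun x => .seq x c))) := by
  induction l with
  | nil => exact Eqv.B7 c
  | cons x t ih =>
    simp only [List.map_cons, sumList_cons]
    exact Eqv.trans (Eqv.B4 _ _ _) (Eqv.addCongr (Eqv.refl _) ih)

lemma sum_perm {l l' : List (SExp A)} (h : l.Perm l') :
    Eqv (sumList l) (sumList l') := by
  induction h with
  | nil => exact Eqv.refl _
  | cons x _ ih => exact Eqv.addCongr (Eqv.refl x) ih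
  | swap x y l =>
    exact Eqv.trans (Eqv.B2 _ _ _)
      (Eqv.trans (Eqv.addCongr (Eqv.B1 _ _) (Eqv.refl _)) (Eqv.symm (Eqv.B2 _ _ _)))
  | trans _ _ ih1 ih2 => exact Eqv.trans ih1 ih2

lemma sum_map_congr {α : Type} {l : List α} {g h : α → SExp A}
    (H : ∀ x ∈ l, Eqv (g x) (h x)) :
    Eqv (sumList (l.map g)) (sumList (l.map h)) := by
  induction l with
  | nil => exact Eqv.refl _
  | cons x t ih =>
    exact Eqv.addCongr (H x List.mem_cons_self)
      (ih fun z hz => H z (List.mem_cons_of_mem _ hz))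

lemma stmt4_aux (e : SExp A) :
    ∃ (outs : List A) (trs : List (A × SExp A)),
      (∀ a, SOut e a ↔ a ∈ outs) ∧
      (∀ a f, STr e a f ↔ (a, f) ∈ trs) ∧
      Eqv e (sumList (outs.map SExp.act ++
        trs.map (fun p => SExp.seq (SExp.act p.1) p.2))) := by
  induction e with
  | act a =>
    refine ⟨[a], [], ?_, ?_, ?_⟩
    · intro b
      constructor
      · rintro ⟨⟩; simp
      · simp only [List.mem_singleton]; rintro rfl; exact SOut.act _
    · intro b f
      constructor
      · rintro ⟨⟩
      · simp
    · simpa using Eqv.symm (Eqv.B6 (.act a))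
  | zero =>
    refine ⟨[], [], ?_, ?_, ?_⟩
    · intro b; constructor
      · rintro ⟨⟩
      · simp
    · intro b f; constructor
      · rintro ⟨⟩
      · simp
    · exact Eqv.refl _
  | add e1 e2 ih1 ih2 =>
    obtain ⟨o1, t1, ho1, ht1, he1⟩ := ih1
    obtain ⟨o2, t2, ho2, ht2, he2⟩ := ih2
    refine ⟨o1 ++ o2, t1 ++ t2, ?_, ?_, ?_⟩
    · intro b
      constructor
      · intro h
        cases h with
        | addL h => exact List.mem_append.2 (Or.inl ((ho1 b).1 h))
        | addR h => exact List.mem_append.2 (Or.inr ((ho2 b).1 h))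
      · intro h
        rcases List.mem_append.1 h with h | h
        · exact SOut.addL ((ho1 b).2 h)
        · exact SOut.addR ((ho2 b).2 h)
    · intro b f
      constructor
      · intro h
        cases h with
        | addL h => exact List.mem_append.2 (Or.inl ((ht1 b f).1 h))
        | addR h => exact List.mem_append.2 (Or.inr ((ht2 b f).1 h))
      · intro h
        rcases List.mem_append.1 h with h | h
        · exact STr.addL ((ht1 b f).2 h)
        · exact STr.addR ((ht2 b f).2 h)
    · refine Eqv.trans (Eqv.addCongr he1 he2) ?_
      refine Eqv.trans (Eqv.symm (sum_append _ _)) (sum_perm ?_)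
      simp only [List.map_append]
      rw [← Multiset.coe_eq_coe]
      simp only [← Multiset.coe_add]
      abel
  | seq e1 e2 ih1 ih2 =>
    obtain ⟨o1, t1, ho1, ht1, he1⟩ := ih1
    refine ⟨[], o1.map (fun a => (a, e2)) ++
        t1.map (fun p => (p.1, SExp.seq p.2 e2)), ?_, ?_, ?_⟩
    · intro b; constructor
      · rintro ⟨⟩
      · simp
    · intro b f
      constructor
      · intro h
        cases h with
        | seqO h =>
          refine List.mem_append.2 (Or.inl ?_)
          exact List.mem_map.2 ⟨b, (ho1 b).1 h, rfl⟩
        | seqT h =>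
          refine List.mem_append.2 (Or.inr ?_)
          exact List.mem_map.2 ⟨(b, _), (ht1 b _).1 h, rfl⟩
      · intro h
        rcases List.mem_append.1 h with h | h
        · obtain ⟨a, ha, h⟩ := List.mem_map.1 h
          cases h
          exact STr.seqO ((ho1 b).2 ha)
        · obtain ⟨⟨a, g⟩, ha, h⟩ := List.mem_map.1 h
          cases h
          exact STr.seqT ((ht1 a g).2 ha)
    · refine Eqv.trans (Eqv.seqCongr he1 (Eqv.refl e2)) ?_
      refine Eqv.trans (seq_sum _ e2) ?_
      simp only [List.map_append, List.map_map, List.map_nil, List.nil_append,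
        Function.comp_def]
      refine Eqv.trans (sum_append _ _) ?_
      refine Eqv.trans (Eqv.addCongr (Eqv.refl _)
        (sum_map_congr (fun p _ => Eqv.symm (Eqv.B5 (.act p.1) p.2 e2)))) ?_
      exact Eqv.symm (sum_append _ _)
  | star e1 e2 ih1 ih2 =>
    obtain ⟨o1, t1, ho1, ht1, he1⟩ := ih1
    obtain ⟨o2, t2, ho2, ht2, he2⟩ := ih2
    refine ⟨o2, t2 ++ t1.map (fun p => (p.1, SExp.seq p.2 (.star e1 e2))) ++
        o1.map (fun a => (a, SExp.star e1 e2)), ?_, ?_, ?_⟩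
    · intro b
      constructor
      · intro h
        cases h with
        | star h => exact (ho2 b).1 h
      · intro h
        exact SOut.star ((ho2 b).2 h)
    · intro b f
      constructor
      · intro h
        cases h with
        | starR h =>
          exact List.mem_append.2 (Or.inl (List.mem_append.2 (Or.inl ((ht2 b f).1 h))))
        | starL h =>
          exact List.mem_append.2 (Or.inl (List.mem_append.2 (Or.inr
            (List.mem_map.2 ⟨(b, _), (ht1 b _).1 h, rfl⟩))))
        | starO h =>
          exact List.mem_append.2 (Or.inr (List.mem_map.2 ⟨b, (ho1 b).1 h, rfl⟩))
      · intro h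
        rcases List.mem_append.1 h with h | h
        · rcases List.mem_append.1 h with h | h
          · exact STr.starR ((ht2 b f).2 h)
          · obtain ⟨⟨a, g⟩, ha, h⟩ := List.mem_map.1 h
            cases h
            exact STr.starL ((ht1 a g).2 ha)
        · obtain ⟨a, ha, h⟩ := List.mem_map.1 h
          cases h
          exact STr.starO ((ho1 b).2 ha)
    · refine Eqv.trans (Eqv.BKS1 e1 e2) ?_
      refine Eqv.trans (Eqv.addCongr
        (Eqv.seqCongr he1 (Eqv.refl (.star e1 e2))) he2) ?_
      refine Eqv.trans (Eqv.addCongr (seq_sum _ (.star e1 e2)) (Eqv.refl _)) ?_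
      simp only [List.map_append, List.map_map, Function.comp_def]
      refine Eqv.trans (Eqv.addCongr (sum_append _ _) (Eqv.refl _)) ?_
      refine Eqv.trans (Eqv.addCongr (Eqv.addCongr (Eqv.refl _)
        (sum_map_congr (fun p _ =>
          Eqv.symm (Eqv.B5 (.act p.1) p.2 (.star e1 e2))))) (Eqv.refl _)) ?_
      refine Eqv.trans (Eqv.addCongr (Eqv.symm (sum_append _ _)) (Eqv.refl _)) ?_
      refine Eqv.trans (Eqv.symm (sum_append _ _)) (sum_perm ?_)
      rw [← Multiset.coe_eq_coe]
      simp only [← Multiset.coe_add]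
      abel

end Aux

/-- Fundamental theorem: every 1-free star expression is provably equal to the
sum of its outputs and outgoing transitions, `e ≡ Σ_{e ⇒ a} a + Σ_{e →a f} a·f`
(the sets of outputs and transitions are finite; the empty sum is `0`). -/
theorem stmt4 {A : Type} (e : SExp A) :
    ∃ (outs : List A) (trs : List (A × SExp A)),
      outs.Nodup ∧ trs.Nodup ∧
      (∀ a, SOut e a ↔ a ∈ outs) ∧
      (∀ a f, STr e a f ↔ (a, f) ∈ trs) ∧
      Eqv e (sumList (outs.map SExp.act ++
        trs.map (fun p => SExp.seq (SExp.act p.1) p.2))) := by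
  classical
  obtain ⟨o, t, ho, ht, he⟩ := stmt4_aux e
  refine ⟨o.dedup, t.dedup, List.nodup_dedup o, List.nodup_dedup t, ?_, ?_, ?_⟩
  · intro a; rw [ho a, List.mem_dedup]
  · intro a f; rw [ht a f, List.mem_dedup]
  · refine Eqv.trans he (sum_ext ?_ ?_) <;>
    · intro x hx
      refine ⟨x, ?_, Eqv.refl x⟩
      simp only [List.mem_append, List.mem_map, List.mem_dedup] at hx ⊢
      exact hx
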